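/- For every integer d ≥ 1 there exist constants c_d, C_d > 0 such that for every mean-zero Gaussian random vector (Z_1, …, Z_d) with values in ℝ^d in which each coordinate has strictly positive variance, c_d · ∏_{j=1}^d √(Var Z_j) ≤ E[ |Z_1| ⋯ |Z_d| ] ≤ C_d · ∏_{j=1}^d √(Var Z_j). -/

import Mathlib

open MeasureTheory ProbabilityTheory Real Set
open scoped NNReal ENNReal
open scoped NNReal ENNReal

namespace S8Aux

variable {w : ℝ≥0}

lemma integral_gaussianReal_eq (w : ℝ≥0) (hw : w ≠ 0) (g : ℝ → ℝ) :
    ∫ x, g x ∂(gaussianReal 0 w) = ∫ x, gaussianPDFReal 0 w x * g x := by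
  rw [gaussianReal_of_var_ne_zero 0 hw]
  have hd : gaussianPDF 0 w = fun x => ((fun y => (gaussianPDFReal 0 w y).toNNReal) x : ℝ≥0∞) := by
    funext x
    simp [gaussianPDF, ENNReal.ofReal]
  rw [hd, integral_withDensity_eq_integral_smul
    ((measurable_gaussianPDFReal 0 w).real_toNNReal) g]
  congr 1 with x
  simp [NNReal.smul_def, Real.coe_toNNReal _ (gaussianPDFReal_nonneg 0 w x)]

lemma integrable_gaussianReal_iff (w : ℝ≥0) (hw : w ≠ 0) (g : ℝ → ℝ) :
    Integrable g (gaussianReal 0 w) ↔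
      Integrable (fun x => gaussianPDFReal 0 w x * g x) volume := by
  rw [gaussianReal_of_var_ne_zero 0 hw]
  have hd : gaussianPDF 0 w = fun x => ((fun y => (gaussianPDFReal 0 w y).toNNReal) x : ℝ≥0∞) := by
    funext x
    simp [gaussianPDF, ENNReal.ofReal]
  rw [hd, integrable_withDensity_iff_integrable_smul
    ((measurable_gaussianPDFReal 0 w).real_toNNReal)]
  constructor <;> intro h <;> refine h.congr (Filter.Eventually.of_forall fun x => ?_) <;>
    simp [NNReal.smul_def, Real.coe_toNNReal _ (gaussianPDFReal_nonneg 0 w x)]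


lemma integrable_abs_pow_gaussianReal (w : ℝ≥0) (hw : w ≠ 0) (n : ℕ) :
    Integrable (fun x => |x| ^ n) (gaussianReal 0 w) := by
  have hwpos : (0 : ℝ) < (w : ℝ) := lt_of_le_of_ne w.coe_nonneg (by exact_mod_cast hw.symm)
  have hb : (0 : ℝ) < (2 * (w : ℝ))⁻¹ := by positivity
  set b : ℝ := (2 * (w : ℝ))⁻¹ with hbdef
  rw [integrable_gaussianReal_iff w hw]
  have h1 : Integrable (fun x : ℝ => Real.exp (-b * x ^ 2)) volume :=
    integrable_exp_neg_mul_sq hb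
  have h2 : Integrable (fun x : ℝ => x ^ (2 * n) * Real.exp (-b * x ^ 2)) volume := by
    have := integrable_rpow_mul_exp_neg_mul_sq hb
      (s := ((2 * n : ℕ) : ℝ)) (lt_of_lt_of_le (by norm_num) (Nat.cast_nonneg _))
    refine this.congr (Filter.Eventually.of_forall fun x => ?_)
    show x ^ ((2*n : ℕ) : ℝ) * rexp (-b * x ^ 2) = _
    rw [Real.rpow_natCast x (2 * n)]
  have h3 : Integrable (fun x : ℝ =>
      (Real.sqrt (2 * π * w))⁻¹ * (Real.exp (-b * x ^ 2) + x ^ (2 * n) * Real.exp (-b * x ^ 2)))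
      volume := ((h1.add h2).const_mul _)
  refine h3.mono' ?_ (Filter.Eventually.of_forall fun x => ?_)
  · exact ((measurable_gaussianPDFReal 0 w).mul
      ((measurable_id.abs).pow_const n)).aestronglyMeasurable
  · have hpdf : gaussianPDFReal 0 w x = (Real.sqrt (2 * π * w))⁻¹ * Real.exp (-b * x ^ 2) := by
      simp only [gaussianPDFReal, sub_zero]
      congr 1
      rw [hbdef]
      ring_nf
    have habs : |x| ^ n ≤ 1 + x ^ (2 * n) := by
      rcases le_or_gt (|x|) 1 with h | h
      · have : |x| ^ n ≤ 1 := pow_le_one₀ (abs_nonneg x) h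
        have h2n : (0:ℝ) ≤ x ^ (2*n) := by rw [pow_mul]; positivity
        linarith
      · have : |x| ^ n ≤ |x| ^ (2 * n) :=
          pow_le_pow_right₀ h.le (by omega)
        have : |x| ^ n ≤ x ^ (2 * n) := by
          rwa [pow_mul, sq_abs, ← pow_mul] at this
        have := this; nlinarith [this]
    have hnn : 0 ≤ gaussianPDFReal 0 w x * |x| ^ n :=
      mul_nonneg (gaussianPDFReal_nonneg 0 w x) (by positivity)
    rw [Real.norm_eq_abs, abs_of_nonneg hnn, hpdf]
    have hexp : (0:ℝ) < Real.exp (-b * x ^ 2) := Real.exp_pos _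
    have hc : (0:ℝ) ≤ (Real.sqrt (2 * π * w))⁻¹ := by positivity
    calc (Real.sqrt (2 * π * w))⁻¹ * Real.exp (-b * x ^ 2) * |x| ^ n
        ≤ (Real.sqrt (2 * π * w))⁻¹ * Real.exp (-b * x ^ 2) * (1 + x ^ (2*n)) := by
          apply mul_le_mul_of_nonneg_left habs (by positivity)
      _ = (Real.sqrt (2 * π * w))⁻¹ *
            (Real.exp (-b * x ^ 2) + x ^ (2*n) * Real.exp (-b * x ^ 2)) := by ring

end S8Aux
namespace S8Aux2
open MeasureTheory ProbabilityTheory Real Set S8Aux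
open scoped NNReal ENNReal

lemma gaussian_symm (w : ℝ≥0) :
    Measure.map (fun x : ℝ => -x) (gaussianReal 0 w) = gaussianReal 0 w := by
  have h := gaussianReal_map_const_mul (μ := 0) (v := w) (-1)
  have e1 : ((-1:ℝ) * 0) = 0 := by norm_num
  have e2 : (NNReal.mk ((-1:ℝ)^2) (sq_nonneg _) : ℝ≥0) = (1 : ℝ≥0) := by
    rw [← NNReal.coe_inj]; push_cast; norm_num
  have e3 : ((-1:ℝ) * ·) = (fun x : ℝ => -x) := by funext x; ring
  rw [e1, e2, one_mul, e3] at h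
  exact h

lemma integral_id_gaussianReal (w : ℝ≥0) : ∫ x, x ∂(gaussianReal 0 w) = 0 := by
  have hsymm := gaussian_symm w
  have hmeas : Measurable (fun x : ℝ => -x) := measurable_neg
  have : ∫ x, x ∂(gaussianReal 0 w) = ∫ x, -x ∂(gaussianReal 0 w) := by
    conv_lhs => rw [← hsymm]
    rw [integral_map (f := fun x : ℝ => x) hmeas.aemeasurable measurable_id.aestronglyMeasurable]
  have h2 : ∫ x, -x ∂(gaussianReal 0 w) = -∫ x, x ∂(gaussianReal 0 w) := integral_neg _
  linarith [this, h2]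

lemma integral_sq_gaussianReal (w : ℝ≥0) (hw : w ≠ 0) :
    ∫ x, x ^ 2 ∂(gaussianReal 0 w) = (w : ℝ) := by
  have hwpos : (0 : ℝ) < (w : ℝ) := lt_of_le_of_ne w.coe_nonneg (by exact_mod_cast hw.symm)
  set t : ℝ := (w : ℝ) with ht
  have hb : (0 : ℝ) < (2 * t)⁻¹ := by positivity
  set b : ℝ := (2 * t)⁻¹ with hbdef
  rw [integral_gaussianReal_eq w hw]
  have hpdf : ∀ x : ℝ, gaussianPDFReal 0 w x * x ^ 2
      = (Real.sqrt (2 * π * t))⁻¹ * (x ^ 2 * Real.exp (-b * x ^ 2)) := by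
    intro x
    simp only [gaussianPDFReal, sub_zero]
    rw [hbdef, ht]
    ring_nf
  simp_rw [hpdf]
  rw [integral_const_mul]
  -- compute ∫ x^2 * exp (-b x^2) over ℝ
  have hint : Integrable (fun x : ℝ => x ^ 2 * Real.exp (-b * x ^ 2)) volume := by
    have := integrable_rpow_mul_exp_neg_mul_sq hb (s := ((2:ℕ):ℝ))
      (lt_of_lt_of_le (by norm_num) (Nat.cast_nonneg _))
    refine this.congr (Filter.Eventually.of_forall fun x => ?_)
    show x ^ ((2:ℕ):ℝ) * rexp (-b * x ^ 2) = _
    rw [Real.rpow_natCast]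
  have heven : ∀ x : ℝ, (fun y : ℝ => y ^ 2 * Real.exp (-b * y ^ 2)) (-x)
      = (fun y : ℝ => y ^ 2 * Real.exp (-b * y ^ 2)) x := by
    intro x; simp [neg_pow]
  have hIoi : ∫ x in Ioi (0:ℝ), x ^ 2 * Real.exp (-b * x ^ 2)
      = b ^ (-(3:ℝ)/2) * (1/2) * Real.Gamma (3/2) := by
    have := integral_rpow_mul_exp_neg_mul_rpow (p := 2) (q := 2) (b := b)
      (by norm_num) (by norm_num) hb
    rw [show ((2:ℝ)+1) = 3 by norm_num] at this
    rw [← this]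
    refine setIntegral_congr_fun measurableSet_Ioi (fun x hx => ?_)
    have hx2 : x ^ (2:ℝ) = x ^ (2:ℕ) := by
      rw [← Real.rpow_natCast x 2]; norm_num
    rw [hx2]
  have hsplit : ∫ x : ℝ, x ^ 2 * Real.exp (-b * x ^ 2)
      = 2 * ∫ x in Ioi (0:ℝ), x ^ 2 * Real.exp (-b * x ^ 2) := by
    have h1 : ∫ x in Iic (0:ℝ), x ^ 2 * Real.exp (-b * x ^ 2)
        = ∫ x in Ioi (0:ℝ), x ^ 2 * Real.exp (-b * x ^ 2) := by
      rw [← neg_zero, ← integral_comp_neg_Ioi]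
      simp [neg_pow]
    rw [← intervalIntegral.integral_Iic_add_Ioi (hint.integrableOn) (hint.integrableOn), h1]
    ring
  rw [hsplit, hIoi]
  have hG : Real.Gamma (3/2) = Real.sqrt π / 2 := by
    have : (3:ℝ)/2 = 1/2 + 1 := by norm_num
    rw [this, Real.Gamma_add_one (by norm_num), Real.Gamma_one_half_eq]
    ring
  rw [hG]
  -- now pure algebra
  have hbinv : b⁻¹ = 2 * t := by rw [hbdef, inv_inv]
  have hbval : b ^ (-(3:ℝ)/2) = (2*t) * Real.sqrt (2*t) := by
    rw [show (-(3:ℝ)/2) = -(3/2) by norm_num, Real.rpow_neg hb.le, ← Real.inv_rpow hb.le, hbinv]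
    rw [show ((3:ℝ)/2) = 1 + 1/2 by norm_num, Real.rpow_add (by positivity), Real.rpow_one]
    congr 1
    rw [← Real.sqrt_eq_rpow]
  rw [hbval]
  have hs1 : Real.sqrt (2 * π * t) = Real.sqrt π * Real.sqrt (2*t) := by
    rw [← Real.sqrt_mul (by positivity)]
    ring_nf
  rw [hs1]
  have h2t : Real.sqrt (2*t) > 0 := Real.sqrt_pos.mpr (by positivity)
  have hpi : Real.sqrt π > 0 := Real.sqrt_pos.mpr Real.pi_pos
  field_simp
end S8Aux2
namespace S8Aux3
open MeasureTheory ProbabilityTheory Real Set S8Aux S8Aux2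
open scoped NNReal ENNReal

lemma variance_id_gaussianReal (w : ℝ≥0) (hw : w ≠ 0) :
    variance (fun x => x) (gaussianReal 0 w) = (w : ℝ) := by
  have hint : Integrable (fun x : ℝ => x ^ 2) (gaussianReal 0 w) := by
    refine (integrable_abs_pow_gaussianReal w hw 2).congr
      (Filter.Eventually.of_forall fun x => ?_)
    simp [sq_abs]
  have hasm : AEStronglyMeasurable (fun x : ℝ => x) (gaussianReal 0 w) :=
    measurable_id'.aestronglyMeasurable
  have hmem : MemLp (fun x : ℝ => x) 2 (gaussianReal 0 w) := by
    rw [memLp_two_iff_integrable_sq hasm]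
    exact hint
  rw [variance_eq_sub hmem]
  simp only [Pi.pow_apply]
  rw [integral_sq_gaussianReal w hw, integral_id_gaussianReal w]
  ring

lemma integral_abs_pow_gaussianReal_eq (w : ℝ≥0) (hw : w ≠ 0) (n : ℕ) :
    ∫ x, |x| ^ n ∂(gaussianReal 0 w)
      = Real.sqrt w ^ n * ∫ x, |x| ^ n ∂(gaussianReal 0 (1 : ℝ≥0)) := by
  have hwpos : (0 : ℝ) < (w : ℝ) := lt_of_le_of_ne w.coe_nonneg (by exact_mod_cast hw.symm)
  have hmap : Measure.map (fun x : ℝ => Real.sqrt w * x) (gaussianReal 0 (1:ℝ≥0))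
      = gaussianReal 0 w := by
    have h := gaussianReal_map_const_mul (μ := 0) (v := (1:ℝ≥0)) (Real.sqrt w)
    have e1 : (Real.sqrt w * 0 : ℝ) = 0 := by ring
    have e2 : (NNReal.mk ((Real.sqrt w)^2) (sq_nonneg _) : ℝ≥0) = w := by
      rw [← NNReal.coe_inj]; simp [Real.sq_sqrt hwpos.le]
    have e3 : ((Real.sqrt w : ℝ) * ·) = (fun x : ℝ => Real.sqrt w * x) := rfl
    rw [e1, e2, mul_one, e3] at h
    exact h
  rw [← hmap, integral_map (f := fun x : ℝ => |x| ^ n) (by fun_prop) ((measurable_id'.abs.pow_const n).aestronglyMeasurable)]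
  rw [← integral_const_mul]
  congr 1 with x
  rw [abs_mul, mul_pow, abs_of_nonneg (Real.sqrt_nonneg _)]

lemma gaussianReal_abs_le (w : ℝ≥0) (hw : w ≠ 0) (s : ℝ) (hs : 0 ≤ s) :
    gaussianReal 0 w {x : ℝ | |x| ≤ s} ≤ ENNReal.ofReal (s / Real.sqrt w) := by
  have hwpos : (0 : ℝ) < (w : ℝ) := lt_of_le_of_ne w.coe_nonneg (by exact_mod_cast hw.symm)
  have hset : {x : ℝ | |x| ≤ s} = Icc (-s) s := by
    ext x; simp [abs_le]
  rw [hset, gaussianReal_apply_eq_integral 0 hw]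
  apply ENNReal.ofReal_le_ofReal
  have hbound : ∀ x ∈ Icc (-s) s, gaussianPDFReal 0 w x ≤ (2 * Real.sqrt w)⁻¹ := by
    intro x _
    simp only [gaussianPDFReal, sub_zero]
    have h1 : Real.exp (-x^2 / (2 * w)) ≤ 1 := by
      rw [Real.exp_le_one_iff, neg_div]
      exact neg_nonpos.mpr (by positivity)
    have h2 : (2 * Real.sqrt w) ≤ Real.sqrt (2 * π * w) := by
      rw [show (2 * π * w : ℝ) = (2*π) * w by ring, Real.sqrt_mul (by positivity)]
      have h4 : Real.sqrt 4 = 2 := by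
        rw [show (4:ℝ) = 2^2 by norm_num, Real.sqrt_sq (by norm_num : (0:ℝ) ≤ 2)]
      have : (2:ℝ) ≤ Real.sqrt (2*π) := by
        rw [← h4]
        apply Real.sqrt_le_sqrt
        nlinarith [Real.pi_gt_three]
      nlinarith [Real.sqrt_nonneg (w:ℝ)]
    calc (Real.sqrt (2 * π * w))⁻¹ * Real.exp (-x^2 / (2*w))
        ≤ (Real.sqrt (2 * π * w))⁻¹ * 1 := by
          apply mul_le_mul_of_nonneg_left h1 (by positivity)
      _ = (Real.sqrt (2 * π * w))⁻¹ := mul_one _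
      _ ≤ (2 * Real.sqrt w)⁻¹ := by
          apply inv_anti₀ (by positivity) h2
  calc ∫ x in Icc (-s) s, gaussianPDFReal 0 w x
      ≤ ∫ _ in Icc (-s) s, (2 * Real.sqrt w)⁻¹ := by
        apply setIntegral_mono_on (integrable_gaussianPDFReal 0 w).integrableOn
          (integrableOn_const (by rw [Real.volume_Icc]; exact ENNReal.ofReal_ne_top))
          measurableSet_Icc hbound
    _ = (volume (Icc (-s) s)).toReal * (2 * Real.sqrt w)⁻¹ := by
        rw [setIntegral_const, smul_eq_mul, measureReal_def]
    _ ≤ s / Real.sqrt w := by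
        rw [Real.volume_Icc, show s - -s = 2 * s by ring,
          ENNReal.toReal_ofReal (by positivity)]
        have hsq : (0:ℝ) < Real.sqrt w := Real.sqrt_pos.mpr hwpos
        apply le_of_eq
        field_simp

end S8Aux3
open MeasureTheory ProbabilityTheory Real Set S8Aux S8Aux2 S8Aux3
open scoped NNReal ENNReal

/-- For every `d ≥ 1` there are constants `c_d, C_d > 0` such that for every centered
Gaussian probability measure `ν` on `ℝ^d` (every linear functional is a centered real
Gaussian) whose coordinates have strictly positive variance,
`c_d ∏_j √(Var Z_j) ≤ E[|Z₁| ⋯ |Z_d|] ≤ C_d ∏_j √(Var Z_j)`. -/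
theorem statement8 (d : ℕ) (hd : 1 ≤ d) :
    ∃ c C : ℝ, 0 < c ∧ 0 < C ∧
      ∀ ν : Measure (Fin d → ℝ), IsProbabilityMeasure ν →
        (∀ l : (Fin d → ℝ) →ₗ[ℝ] ℝ, ∃ σ : NNReal,
          Measure.map (fun v => l v) ν = gaussianReal 0 σ) →
        (∀ j : Fin d, 0 < variance (fun v => v j) ν) →
        (c * ∏ j : Fin d, Real.sqrt (variance (fun v => v j) ν)
            ≤ ∫ v, ∏ j : Fin d, |v j| ∂ν) ∧
        (∫ v, ∏ j : Fin d, |v j| ∂ν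
            ≤ C * ∏ j : Fin d, Real.sqrt (variance (fun v => v j) ν)) := by
  classical
  have hd0 : (0:ℝ) < (d:ℝ) := by exact_mod_cast hd
  set M : ℝ := ∫ x, |x| ^ d ∂(gaussianReal 0 (1:ℝ≥0)) with hMdef
  have hM0 : 0 ≤ M := integral_nonneg fun x => by positivity
  set ε : ℝ := 1/(2*(d:ℝ)) with hεdef
  have hεpos : 0 < ε := div_pos one_pos (by linarith)
  refine ⟨ε^d * (1/2), M + 1,
    mul_pos (pow_pos hεpos d) (by norm_num), by linarith, ?_⟩
  intro ν hprob h hvar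
  have hcm : ∀ j : Fin d, Measurable fun v : Fin d → ℝ => v j :=
    fun j => measurable_pi_apply j
  have hcoord : ∀ j : Fin d, ∃ w : ℝ≥0,
      Measure.map (fun v : Fin d → ℝ => v j) ν = gaussianReal 0 w := by
    intro j
    obtain ⟨w, hw⟩ := h (LinearMap.proj j)
    refine ⟨w, ?_⟩
    simpa only [LinearMap.proj_apply] using hw
  choose w hw using hcoord
  have hident : ∀ j, IdentDistrib (fun v : Fin d → ℝ => v j) (fun x : ℝ => x)
      ν (gaussianReal 0 (w j)) := fun j =>
    ⟨(hcm j).aemeasurable, measurable_id'.aemeasurable, by rw [hw j, Measure.map_id']⟩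
  have hw0 : ∀ j, w j ≠ 0 := by
    intro j hj
    have h1 := (hident j).variance_eq
    rw [hj, gaussianReal_zero_var] at h1
    have h2 : variance (fun x : ℝ => x) (Measure.dirac (0:ℝ)) = 0 := by
      have he : evariance (fun x : ℝ => x) (Measure.dirac (0:ℝ)) = 0 := by
        rw [evariance, lintegral_dirac]
        simp [integral_dirac]
      rw [variance, he]
      rfl
    rw [h2] at h1
    exact absurd (hvar j) (by rw [h1]; exact lt_irrefl 0)
  have hVar : ∀ j, variance (fun v : Fin d → ℝ => v j) ν = (w j : ℝ) := fun j => by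
    rw [(hident j).variance_eq, variance_id_gaussianReal (w j) (hw0 j)]
  have hwpos : ∀ j, (0:ℝ) < (w j : ℝ) := fun j => by rw [← hVar j]; exact hvar j
  set t : Fin d → ℝ := fun j => Real.sqrt (w j) with htdef
  have htpos : ∀ j, 0 < t j := fun j => Real.sqrt_pos.mpr (hwpos j)
  simp only [hVar]
  -- integrability of coordinate powers
  have hint_j : ∀ j : Fin d, Integrable (fun v : Fin d → ℝ => |v j| ^ d) ν := by
    intro j
    have h1 : Integrable (fun x : ℝ => |x| ^ d) (gaussianReal 0 (w j)) :=
      integrable_abs_pow_gaussianReal (w j) (hw0 j) d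
    rw [← hw j] at h1
    exact (integrable_map_measure ((measurable_id'.abs.pow_const d).aestronglyMeasurable)
      (hcm j).aemeasurable).mp h1
  have hmom : ∀ j : Fin d, ∫ v, |v j| ^ d ∂ν = t j ^ d * M := by
    intro j
    have h1 : ∫ v, |v j| ^ d ∂ν = ∫ x, |x| ^ d ∂(gaussianReal 0 (w j)) := by
      rw [← hw j, integral_map (f := fun x : ℝ => |x| ^ d) (hcm j).aemeasurable
        ((measurable_id'.abs.pow_const d).aestronglyMeasurable)]
    rw [h1, integral_abs_pow_gaussianReal_eq (w j) (hw0 j) d]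
  -- pointwise AM-GM bound
  have hAM : ∀ v : Fin d → ℝ, ∏ j, |v j|
      ≤ (∏ j, t j) * ((1/(d:ℝ)) * ∑ j, (|v j| / t j) ^ d) := by
    intro v
    have h1 : ∏ j, (|v j| / t j) ≤ (1/(d:ℝ)) * ∑ j, (|v j| / t j) ^ d := by
      have hgm := Real.geom_mean_le_arith_mean_weighted Finset.univ (fun _ => 1/(d:ℝ))
        (fun j : Fin d => (|v j| / t j) ^ d) (fun i _ => by positivity)
        (by rw [Finset.sum_const, Finset.card_univ, Fintype.card_fin, nsmul_eq_mul]
            field_simp)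
        (fun i _ => by positivity)
      calc ∏ j, (|v j| / t j) = ∏ j, ((|v j| / t j) ^ d) ^ ((1:ℝ)/(d:ℝ)) := by
            apply Finset.prod_congr rfl
            intro j _
            rw [← Real.rpow_natCast (|v j| / t j) d, ← Real.rpow_mul (by positivity),
              mul_one_div, div_self (by exact_mod_cast hd0.ne' : (d:ℝ) ≠ 0), Real.rpow_one]
        _ ≤ ∑ j, (1/(d:ℝ)) * (|v j| / t j) ^ d := hgm
        _ = (1/(d:ℝ)) * ∑ j, (|v j| / t j) ^ d := by rw [Finset.mul_sum]
    calc ∏ j, |v j| = (∏ j, t j) * ∏ j, (|v j| / t j) := by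
          rw [← Finset.prod_mul_distrib]
          apply Finset.prod_congr rfl
          intro j _
          rw [eq_comm, mul_comm, div_mul_cancel₀ _ (htpos j).ne']
      _ ≤ _ := mul_le_mul_of_nonneg_left h1
          (Finset.prod_nonneg fun j _ => (htpos j).le)
  have hfmeas : Measurable fun v : Fin d → ℝ => ∏ j, |v j| :=
    Finset.measurable_prod _ (fun j _ => (hcm j).abs)
  have hg_int : Integrable
      (fun v : Fin d → ℝ => (∏ j, t j) * ((1/(d:ℝ)) * ∑ j, (|v j| / t j) ^ d)) ν := by
    apply Integrable.const_mul
    apply Integrable.const_mul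
    apply integrable_finset_sum
    intro j _
    have heq : (fun v : Fin d → ℝ => (|v j| / t j) ^ d)
        = fun v => ((t j)⁻¹) ^ d * |v j| ^ d := by
      funext v
      rw [div_pow, div_eq_mul_inv, mul_comm, inv_pow]
    rw [heq]
    exact (hint_j j).const_mul _
  have hf_int : Integrable (fun v : Fin d → ℝ => ∏ j, |v j|) ν := by
    refine hg_int.mono' hfmeas.aestronglyMeasurable (Filter.Eventually.of_forall fun v => ?_)
    rw [Real.norm_eq_abs, abs_of_nonneg (Finset.prod_nonneg fun j _ => abs_nonneg _)]
    exact hAM v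
  constructor
  · -- lower bound
    set B : Fin d → Set (Fin d → ℝ) := fun j => {v | |v j| ≤ ε * t j} with hBdef
    have hBmeas : ∀ j, MeasurableSet (B j) :=
      fun j => measurableSet_le (hcm j).abs measurable_const
    have hBj : ∀ j, ν (B j) ≤ ENNReal.ofReal ε := by
      intro j
      have hpre : B j = (fun v : Fin d → ℝ => v j) ⁻¹' {x : ℝ | |x| ≤ ε * t j} := rfl
      rw [hpre, ← Measure.map_apply (hcm j)
        (measurableSet_le measurable_id'.abs measurable_const), hw j]
      refine (gaussianReal_abs_le (w j) (hw0 j) (ε * t j)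
        (by positivity)).trans ?_
      apply ENNReal.ofReal_le_ofReal
      rw [mul_div_assoc, div_self (htpos j).ne', mul_one]
    have hUnion : ν (⋃ j, B j) ≤ ENNReal.ofReal (1/2) := by
      calc ν (⋃ j, B j) ≤ ∑' j, ν (B j) := measure_iUnion_le B
        _ = ∑ j, ν (B j) := tsum_fintype _
        _ ≤ ∑ _j : Fin d, ENNReal.ofReal ε := Finset.sum_le_sum fun j _ => hBj j
        _ = d * ENNReal.ofReal ε := by rw [Finset.sum_const, Finset.card_univ,
            Fintype.card_fin, nsmul_eq_mul]
        _ = ENNReal.ofReal ((d:ℝ) * ε) := by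
            rw [ENNReal.ofReal_mul (by positivity)]
            congr 1
            simp [ENNReal.ofReal_natCast]
        _ = ENNReal.ofReal (1/2) := by
            congr 1
            rw [hεdef]
            field_simp
    set A : Set (Fin d → ℝ) := (⋃ j, B j)ᶜ with hAdef
    have hAmeas : MeasurableSet A := (MeasurableSet.iUnion hBmeas).compl
    have hAge : ENNReal.ofReal (1/2) ≤ ν A := by
      rw [hAdef, measure_compl (MeasurableSet.iUnion hBmeas) (measure_ne_top ν _)]
      rw [measure_univ]
      calc ENNReal.ofReal (1/2) = 1 - ENNReal.ofReal (1/2) := by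
            rw [← ENNReal.ofReal_one, ← ENNReal.ofReal_sub _ (by norm_num)]
            norm_num
        _ ≤ 1 - ν (⋃ j, B j) := by
            apply tsub_le_tsub_left hUnion
    have hAtoReal : (1/2 : ℝ) ≤ (ν A).toReal := by
      have h1 : (ENNReal.ofReal (1/2)).toReal ≤ (ν A).toReal :=
        ENNReal.toReal_mono (measure_ne_top ν A) hAge
      rwa [ENNReal.toReal_ofReal (by norm_num)] at h1
    have hlow1 : ∀ v ∈ A, (∏ j, ε * t j) ≤ ∏ j, |v j| := by
      intro v hv
      apply Finset.prod_le_prod (fun j _ => by positivity)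
      intro j _
      have hvj : v ∉ B j := fun hmem => hv (Set.mem_iUnion.mpr ⟨j, hmem⟩)
      have : ¬ (|v j| ≤ ε * t j) := hvj
      linarith [not_le.mp this]
    calc ε ^ d * (1/2) * ∏ j, Real.sqrt (w j)
        = (∏ j, ε * t j) * (1/2) := by
          rw [Finset.prod_mul_distrib, Finset.prod_const, Finset.card_univ, Fintype.card_fin]
          ring
      _ ≤ (∏ j, ε * t j) * (ν A).toReal := by
          apply mul_le_mul_of_nonneg_left hAtoReal
          exact Finset.prod_nonneg fun j _ => by positivity
      _ ≤ ∫ v in A, ∏ j, |v j| ∂ν :=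
          setIntegral_ge_of_const_le_real hAmeas (measure_ne_top ν A) hlow1 hf_int.integrableOn
      _ ≤ ∫ v, ∏ j, |v j| ∂ν :=
          setIntegral_le_integral hf_int (Filter.Eventually.of_forall fun v =>
            Finset.prod_nonneg fun j _ => abs_nonneg _)
  · -- upper bound
    calc ∫ v, ∏ j, |v j| ∂ν
        ≤ ∫ v, (∏ j, t j) * ((1/(d:ℝ)) * ∑ j, (|v j| / t j) ^ d) ∂ν :=
          integral_mono hf_int hg_int hAM
      _ = (∏ j, t j) * ((1/(d:ℝ)) * ∑ j, ∫ v, (|v j| / t j) ^ d ∂ν) := by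
          rw [integral_const_mul, integral_const_mul, integral_finset_sum]
          intro j _
          have heq : (fun v : Fin d → ℝ => (|v j| / t j) ^ d)
              = fun v => ((t j)⁻¹) ^ d * |v j| ^ d := by
            funext v
            rw [div_pow, div_eq_mul_inv, mul_comm, inv_pow]
          rw [heq]
          exact (hint_j j).const_mul _
      _ = (∏ j, t j) * M := by
          congr 1
          have hsum : ∀ j : Fin d, ∫ v, (|v j| / t j) ^ d ∂ν = M := by
            intro j
            have heq : (fun v : Fin d → ℝ => (|v j| / t j) ^ d)
                = fun v => ((t j)⁻¹) ^ d * |v j| ^ d := by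
              funext v
              rw [div_pow, div_eq_mul_inv, mul_comm, inv_pow]
            rw [heq, integral_const_mul, hmom j, ← mul_assoc, ← mul_pow,
              inv_mul_cancel₀ (htpos j).ne', one_pow, one_mul]
          simp only [hsum]
          rw [Finset.sum_const, Finset.card_univ, Fintype.card_fin, nsmul_eq_mul]
          field_simp
      _ ≤ (M + 1) * ∏ j, Real.sqrt (w j) := by
          have hprod : 0 ≤ ∏ j, t j := Finset.prod_nonneg fun j _ => (htpos j).le
          nlinarith [hprod]
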